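/- The tensor T = a₁⊗(b₁⊗c₂ + b₂⊗c₁) + a₂⊗b₁⊗c₁ + a₃⊗(b₃⊗c₁ + b₁⊗c₃) ∈ ℂ³⊗ℂ³⊗ℂ³ (with {a_i},{b_i},{c_i} bases) has tensor rank exactly 5. -/

import Mathlib

open scoped TensorProduct


noncomputable section

/-- slice pattern of the tensor: tpat j k l -/
def tpat : Fin 3 → Fin 3 → Fin 3 → ℂ := fun j =>
  ![![![0,1,0],![1,0,0],![0,0,0]],
    ![![1,0,0],![0,0,0],![0,0,0]],
    ![![0,0,1],![0,0,0],![1,0,0]]] j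

def N0m (l0 : ℂ) : Fin 3 → Fin 3 → ℂ := ![![-l0,1,0],![1,0,0],![0,0,0]]
def N2m (l2 : ℂ) : Fin 3 → Fin 3 → ℂ := ![![-l2,0,1],![0,0,0],![1,0,0]]

lemma contra (l0 l2 : ℂ) (al be : Fin 4 → ℂ) (Y Z : Fin 4 → Fin 3 → ℂ)
    (h0 : ∀ k l, ∑ i, al i * (Y i k * Z i l) = N0m l0 k l)
    (h2 : ∀ k l, ∑ i, be i * (Y i k * Z i l) = N2m l2 k l)
    (w : Fin 3 → ℂ) (hw : w ≠ 0)
    (hperp : ∀ i, al i * (∑ k, Y i k * w k) = 0 ∧ be i * (∑ k, Y i k * w k) = 0) :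
    False := by
  have key : ∀ (co : Fin 4 → ℂ) (Nf : Fin 3 → Fin 3 → ℂ),
      (∀ k l, ∑ i, co i * (Y i k * Z i l) = Nf k l) →
      (∀ i, co i * (∑ k, Y i k * w k) = 0) →
      ∀ l, ∑ k, Nf k l * w k = 0 := by
    intro co Nf hN hp l
    have : ∑ k, Nf k l * w k = ∑ i, Z i l * (co i * ∑ k, Y i k * w k) := by
      simp only [← hN, Finset.sum_mul]
      rw [Finset.sum_comm]
      refine Finset.sum_congr rfl fun i _ => ?_
      rw [Finset.mul_sum, Finset.mul_sum]
      refine Finset.sum_congr rfl fun k _ => ?_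
      ring
    simp [this, hp]
  have k0 := key al (N0m l0) h0 (fun i => (hperp i).1)
  have k2 := key be (N2m l2) h2 (fun i => (hperp i).2)
  have e1 : w 0 = 0 := by simpa [N0m, Fin.sum_univ_three, Matrix.cons_val_zero, Matrix.cons_val_one, Matrix.head_cons, Matrix.cons_val_two, Matrix.tail_cons, Matrix.vecHead, Matrix.vecTail] using k0 1
  have e0 : w 1 = 0 := by
    have := k0 0
    simp [N0m, Fin.sum_univ_three, e1, Matrix.cons_val_zero, Matrix.cons_val_one, Matrix.head_cons, Matrix.cons_val_two, Matrix.tail_cons, Matrix.vecHead, Matrix.vecTail] at this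
    exact this
  have e2 : w 2 = 0 := by
    have := k2 0
    simp [N2m, Fin.sum_univ_three, e1, Matrix.cons_val_zero, Matrix.cons_val_one, Matrix.head_cons, Matrix.cons_val_two, Matrix.tail_cons, Matrix.vecHead, Matrix.vecTail] at this
    exact this
  apply hw
  funext k
  fin_cases k <;> simpa [e1, e0, e2]

lemma core (X Y Z : Fin 4 → Fin 3 → ℂ)
    (H : ∀ j k l, ∑ i, X i j * (Y i k * Z i l) = tpat j k l) : False := by
  -- find i0 with X i0 1 ≠ 0
  have h100 : ∑ i, X i 1 * (Y i 0 * Z i 0) = 1 := by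
    simpa [tpat] using H 1 0 0
  obtain ⟨i0, -, hi0⟩ := Finset.exists_ne_zero_of_sum_ne_zero
    (s := Finset.univ) (f := fun i => X i 1 * (Y i 0 * Z i 0))
    (by rw [h100]; exact one_ne_zero)
  have hX : X i0 1 ≠ 0 := fun h => hi0 (by simp [h])
  set l0 : ℂ := X i0 0 / X i0 1 with hl0
  set l2 : ℂ := X i0 2 / X i0 1 with hl2
  set al : Fin 4 → ℂ := fun i => X i 0 - l0 * X i 1 with hal
  set be : Fin 4 → ℂ := fun i => X i 2 - l2 * X i 1 with hbe
  have hal0 : al i0 = 0 := by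
    simp only [hal, hl0]
    field_simp
    ring
  have hbe0 : be i0 = 0 := by
    simp only [hbe, hl2]
    field_simp
    ring
  have h0 : ∀ k l, ∑ i, al i * (Y i k * Z i l) = N0m l0 k l := by
    intro k l
    have : ∑ i, al i * (Y i k * Z i l)
        = (∑ i, X i 0 * (Y i k * Z i l)) - l0 * ∑ i, X i 1 * (Y i k * Z i l) := by
      rw [Finset.mul_sum, ← Finset.sum_sub_distrib]
      exact Finset.sum_congr rfl fun i _ => by simp only [hal]; ring
    rw [this, H 0 k l, H 1 k l]
    fin_cases k <;> fin_cases l <;> simp [tpat, N0m, Matrix.vecHead, Matrix.vecTail]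
  have h2 : ∀ k l, ∑ i, be i * (Y i k * Z i l) = N2m l2 k l := by
    intro k l
    have : ∑ i, be i * (Y i k * Z i l)
        = (∑ i, X i 2 * (Y i k * Z i l)) - l2 * ∑ i, X i 1 * (Y i k * Z i l) := by
      rw [Finset.mul_sum, ← Finset.sum_sub_distrib]
      exact Finset.sum_congr rfl fun i _ => by simp only [hbe]; ring
    rw [this, H 2 k l, H 1 k l]
    fin_cases k <;> fin_cases l <;> simp [tpat, N2m, Matrix.vecHead, Matrix.vecTail]
  clear hi0 h100 H
  -- the equivalence Fin 3 ≃ {i // i ≠ i0}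
  have hcard : Fintype.card {i : Fin 4 // i ≠ i0} = 3 := by
    have := Fintype.card_subtype_compl (fun i : Fin 4 => i = i0)
    simpa using this
  let e : Fin 3 ≃ {i : Fin 4 // i ≠ i0} := (Fintype.equivFinOfCardEq hcard).symm
  have hsum : ∀ (g : Fin 4 → ℂ), g i0 = 0 → ∑ m : Fin 3, g (e m) = ∑ i : Fin 4, g i := by
    intro g hg
    rw [Equiv.sum_comp e (fun i : {i : Fin 4 // i ≠ i0} => g i)]
    rw [← Finset.sum_subtype (Finset.univ.erase i0) (by simp) g]
    apply Finset.sum_erase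
    exact hg
  by_cases hall : ∀ i, i ≠ i0 → (al i ≠ 0 ∨ be i ≠ 0)
  · -- all pairs nonzero: choose s avoiding finitely many ratios
    obtain ⟨s, hs⟩ := Infinite.exists_notMem_finset
      (Finset.univ.image fun i : Fin 4 => -(be i) / al i)
    have hs' : ∀ i, i ≠ i0 → s * al i + be i ≠ 0 := by
      intro i hi hc
      by_cases ha : al i = 0
      · rcases hall i hi with h | h
        · exact h ha
        · apply h; simpa [ha] using hc
      · apply hs
        rw [Finset.mem_image]
        refine ⟨i, Finset.mem_univ _, ?_⟩
        field_simp
        linear_combination -hc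
    set ga : Fin 4 → ℂ := fun i => s * al i + be i with hga
    have hga0 : ga i0 = 0 := by simp [hga, hal0, hbe0]
    have hN : ∀ k l, ∑ i, ga i * (Y i k * Z i l) = s * N0m l0 k l + N2m l2 k l := by
      intro k l
      rw [← h0 k l, ← h2 k l, Finset.mul_sum, ← Finset.sum_add_distrib]
      exact Finset.sum_congr rfl fun i _ => by simp only [hga]; ring
    set P : Matrix (Fin 3) (Fin 3) ℂ := Matrix.of fun m k => Y (e m) k with hP
    set Q : Matrix (Fin 3) (Fin 3) ℂ := Matrix.of fun m l => Z (e m) l with hQ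
    set D : Matrix (Fin 3) (Fin 3) ℂ := Matrix.diagonal fun m => ga (e m) with hD
    have hmat : ∀ k l, (P.transpose * D * Q) k l = s * N0m l0 k l + N2m l2 k l := by
      intro k l
      rw [← hN k l, ← hsum (fun i => ga i * (Y i k * Z i l)) (by simp [hga0])]
      rw [Matrix.mul_apply]
      refine Finset.sum_congr rfl fun m _ => ?_
      rw [Matrix.mul_diagonal]
      simp only [hP, hQ, Matrix.of_apply, Matrix.transpose_apply]
      ring
    have hdet0 : (P.transpose * D * Q).det = 0 := by
      have : (P.transpose * D * Q) = Matrix.of fun k l => s * N0m l0 k l + N2m l2 k l := by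
        ext k l; exact hmat k l
      rw [this, Matrix.det_fin_three]
      simp [N0m, N2m, Matrix.vecHead, Matrix.vecTail]
    rw [Matrix.det_mul, Matrix.det_mul, Matrix.det_transpose, Matrix.det_diagonal] at hdet0
    have hprod : (∏ m : Fin 3, ga (e m)) ≠ 0 :=
      Finset.prod_ne_zero_iff.mpr fun m _ => hs' (e m) (e m).2
    have hPQ : P.det = 0 ∨ Q.det = 0 := by
      rcases mul_eq_zero.mp hdet0 with h | h
      · rcases mul_eq_zero.mp h with h' | h'
        · exact Or.inl h'
        · exact absurd h' hprod
      · exact Or.inr h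
    rcases hPQ with hd | hd
    · obtain ⟨w, hw, hvec⟩ := Matrix.exists_mulVec_eq_zero_iff.mpr hd
      refine contra l0 l2 al be Y Z h0 h2 w hw fun i => ?_
      by_cases hi : i = i0
      · subst hi; simp [hal0, hbe0]
      · have hm := congrFun hvec (e.symm ⟨i, hi⟩)
        simp only [Matrix.mulVec, dotProduct, hP, Matrix.of_apply,
          Equiv.apply_symm_apply, Pi.zero_apply] at hm
        constructor <;> rw [show (∑ k, Y i k * w k) = 0 from hm] <;> ring
    · obtain ⟨w, hw, hvec⟩ := Matrix.exists_mulVec_eq_zero_iff.mpr hd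
      have h0' : ∀ k l, ∑ i, al i * (Z i k * Y i l) = N0m l0 k l := by
        intro k l
        have : ∑ i, al i * (Z i k * Y i l) = ∑ i, al i * (Y i l * Z i k) :=
          Finset.sum_congr rfl fun i _ => by ring
        rw [this, h0 l k]
        fin_cases k <;> fin_cases l <;> simp [N0m, Matrix.vecHead, Matrix.vecTail]
      have h2' : ∀ k l, ∑ i, be i * (Z i k * Y i l) = N2m l2 k l := by
        intro k l
        have : ∑ i, be i * (Z i k * Y i l) = ∑ i, be i * (Y i l * Z i k) :=
          Finset.sum_congr rfl fun i _ => by ring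
        rw [this, h2 l k]
        fin_cases k <;> fin_cases l <;> simp [N2m, Matrix.vecHead, Matrix.vecTail]
      refine contra l0 l2 al be Z Y h0' h2' w hw fun i => ?_
      by_cases hi : i = i0
      · subst hi; simp [hal0, hbe0]
      · have hm := congrFun hvec (e.symm ⟨i, hi⟩)
        simp only [Matrix.mulVec, dotProduct, hQ, Matrix.of_apply,
          Equiv.apply_symm_apply, Pi.zero_apply] at hm
        constructor <;> rw [show (∑ k, Z i k * w k) = 0 from hm] <;> ring
  · push_neg at hall
    obtain ⟨i1, hi1, ha1, hb1⟩ := hall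
    set R : Matrix (Fin 3) (Fin 3) ℂ :=
      Matrix.of (fun m k => if (e m : Fin 4) = i1 then 0 else Y (e m) k) with hR
    have hdet : R.det = 0 := by
      apply Matrix.det_eq_zero_of_row_eq_zero (e.symm ⟨i1, hi1⟩)
      intro k
      simp [hR]
    obtain ⟨w, hw, hvec⟩ := Matrix.exists_mulVec_eq_zero_iff.mpr hdet
    refine contra l0 l2 al be Y Z h0 h2 w hw fun i => ?_
    by_cases hi : i = i0
    · subst hi; simp [hal0, hbe0]
    · by_cases hii : i = i1
      · subst hii; simp [ha1, hb1]
      · have hm := congrFun hvec (e.symm ⟨i, hi⟩)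
        simp only [Matrix.mulVec, dotProduct, hR, Matrix.of_apply,
          Equiv.apply_symm_apply, Pi.zero_apply] at hm
        simp only [if_neg hii] at hm
        constructor <;> rw [show (∑ k, Y i k * w k) = 0 from hm] <;> ring

end

/-- The tensor `a₁⊗(b₁⊗c₂ + b₂⊗c₁) + a₂⊗b₁⊗c₁ + a₃⊗(b₃⊗c₁ + b₁⊗c₃)`
(with `{aᵢ}, {bᵢ}, {cᵢ}` bases of 3-dimensional spaces) has tensor rank exactly 5. -/
theorem rank_type_iv_tensor_eq_five {A B C : Type*}
    [AddCommGroup A] [Module ℂ A] [AddCommGroup B] [Module ℂ B] [AddCommGroup C] [Module ℂ C]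
    (a : Module.Basis (Fin 3) ℂ A) (b : Module.Basis (Fin 3) ℂ B) (c : Module.Basis (Fin 3) ℂ C) :
    IsLeast {r : ℕ | ∃ (x : Fin r → A) (y : Fin r → B) (z : Fin r → C),
        (a 0 ⊗ₜ[ℂ] (b 0 ⊗ₜ[ℂ] c 1 + b 1 ⊗ₜ[ℂ] c 0) + a 1 ⊗ₜ[ℂ] (b 0 ⊗ₜ[ℂ] c 0)
          + a 2 ⊗ₜ[ℂ] (b 2 ⊗ₜ[ℂ] c 0 + b 0 ⊗ₜ[ℂ] c 2)
          : A ⊗[ℂ] (B ⊗[ℂ] C))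
          = ∑ i, x i ⊗ₜ[ℂ] (y i ⊗ₜ[ℂ] z i)} 5 := by
  constructor
  · -- membership: explicit rank-5 decomposition
    refine ⟨![a 0, -(a 0), a 2, -(a 2), a 1 - a 0 - a 2],
      ![b 0 + b 1, b 1, b 0 + b 2, b 2, b 0],
      ![c 0 + c 1, c 1, c 0 + c 2, c 2, c 0], ?_⟩
    simp only [Fin.sum_univ_five]
    simp only [Matrix.cons_val_zero, Matrix.cons_val_one, Matrix.head_cons,
      Matrix.cons_val_two, Matrix.cons_val_three, Matrix.cons_val_four, Matrix.tail_cons,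
      Matrix.head_fin_const]
    simp only [TensorProduct.tmul_add, TensorProduct.add_tmul, TensorProduct.sub_tmul,
      TensorProduct.tmul_sub, TensorProduct.neg_tmul, TensorProduct.tmul_neg]
    abel
  · -- lower bound
    rintro r ⟨x, y, z, heq⟩
    by_contra hlt
    push_neg at hlt
    have hr4 : r ≤ 4 := by omega
    -- pad the decomposition to length 4
    set x' : Fin 4 → A := fun i => if h : (i : ℕ) < r then x ⟨i, h⟩ else 0 with hx'
    set y' : Fin 4 → B := fun i => if h : (i : ℕ) < r then y ⟨i, h⟩ else 0 with hy'
    set z' : Fin 4 → C := fun i => if h : (i : ℕ) < r then z ⟨i, h⟩ else 0 with hz'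
    have hpad : ∑ i : Fin 4, x' i ⊗ₜ[ℂ] (y' i ⊗ₜ[ℂ] z' i)
        = ∑ i : Fin r, x i ⊗ₜ[ℂ] (y i ⊗ₜ[ℂ] z i) := by
      have hR : ∑ i : Fin r, x i ⊗ₜ[ℂ] (y i ⊗ₜ[ℂ] z i)
          = ∑ i : Fin r, (fun n => if h : n < r then x ⟨n, h⟩ ⊗ₜ[ℂ] (y ⟨n, h⟩ ⊗ₜ[ℂ] z ⟨n, h⟩)
            else 0) (i : ℕ) :=
        Finset.sum_congr rfl fun i _ => by simp [Fin.isLt]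
      rw [hR, Fin.sum_univ_eq_sum_range
        (fun n => (if h : n < r then x ⟨n, h⟩ else 0) ⊗ₜ[ℂ]
          ((if h : n < r then y ⟨n, h⟩ else 0) ⊗ₜ[ℂ] (if h : n < r then z ⟨n, h⟩ else 0))) 4,
        Fin.sum_univ_eq_sum_range
        (fun n => if h : n < r then x ⟨n, h⟩ ⊗ₜ[ℂ] (y ⟨n, h⟩ ⊗ₜ[ℂ] z ⟨n, h⟩) else 0) r]
      rw [← Finset.sum_subset (Finset.range_subset_range.mpr hr4)
        (fun n _ hn => by
          rw [Finset.mem_range] at hn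
          rw [dif_neg hn]
          simp)]
      refine Finset.sum_congr rfl fun n _ => ?_
      by_cases h : n < r
      · rw [dif_pos h, dif_pos h, dif_pos h, dif_pos h]
      · rw [dif_neg h, dif_neg h, dif_neg h, dif_neg h]
        simp
    have heq4 : (a 0 ⊗ₜ[ℂ] (b 0 ⊗ₜ[ℂ] c 1 + b 1 ⊗ₜ[ℂ] c 0) + a 1 ⊗ₜ[ℂ] (b 0 ⊗ₜ[ℂ] c 0)
          + a 2 ⊗ₜ[ℂ] (b 2 ⊗ₜ[ℂ] c 0 + b 0 ⊗ₜ[ℂ] c 2) : A ⊗[ℂ] (B ⊗[ℂ] C))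
        = ∑ i : Fin 4, x' i ⊗ₜ[ℂ] (y' i ⊗ₜ[ℂ] z' i) := by rw [hpad]; exact heq
    refine core (fun i j => a.repr (x' i) j) (fun i k => b.repr (y' i) k)
      (fun i l => c.repr (z' i) l) fun j k l => ?_
    have h2 := congrArg
      (fun t : A ⊗[ℂ] (B ⊗[ℂ] C) => ((a.tensorProduct (b.tensorProduct c)).repr t) (j, (k, l)))
      heq4
    simp only [map_add, map_sum, Module.Basis.tensorProduct_repr_tmul_apply, Module.Basis.repr_self,
      Finsupp.single_apply, smul_eq_mul, Finsupp.coe_finset_sum, Finset.sum_apply,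
      Finsupp.coe_add, Pi.add_apply] at h2
    have h3 : ∑ i : Fin 4, a.repr (x' i) j * (b.repr (y' i) k * c.repr (z' i) l)
        = ∑ i : Fin 4, c.repr (z' i) l * b.repr (y' i) k * a.repr (x' i) j :=
      Finset.sum_congr rfl fun i _ => by ring
    rw [h3, ← h2]
    fin_cases j <;> fin_cases k <;> fin_cases l <;>
      simp [tpat, Matrix.vecHead, Matrix.vecTail] <;> norm_num
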